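/- Let t₀ ∈ ℝ, ν > 0, D ≥ 0, δ ≥ 0, S₀ ≥ 0, R₀ ≥ 0, I₀ > 0, and T > 0. Let τ : [t₀, t₀+T] → [0,∞) be continuous with τ(t) ≤ τ_max for all t, let β : [0,∞) → [0,1] be continuous, and set Γ(a) = e^{−(ν+D)a} β(a). For continuous x on [t₀, t₀+T] define X(x)(t) = τ(t) F(x)(t) [ I₀ Γ(t−t₀) + ∫_{0}^{t−t₀} Γ(a) x(t−a) da ]. Then for all continuous x₁, x₂ on [t₀, t₀+T], with L_F := 1 + ν δ T², one has ‖X(x₁) − X(x₂)‖ ≤ τ_max T [ L_F ( I₀ + T ‖x₁‖ ) + ‖F(x₂)‖ ] ‖x₁ − x₂‖, where ‖·‖ is the supremum norm on [t₀, t₀+T]. -/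
import Mathlib


open MeasureTheory Set Filter Real

set_option maxHeartbeats 1600000

/-- The operator `F` sending a candidate flow of new infections `x` to the corresponding
number of susceptibles. -/
noncomputable def Fop (t₀ ν D δ S₀ R₀ I₀ : ℝ) (x : ℝ → ℝ) (t : ℝ) : ℝ :=
  S₀ - ∫ m in t₀..t,
    (x m - δ * (Real.exp (-δ * (m - t₀)) * R₀ +
      ν * ∫ σ in t₀..m, Real.exp (-δ * (m - σ)) *
        (Real.exp (-(ν + D) * (σ - t₀)) * I₀ +
          ∫ a in (0 : ℝ)..(σ - t₀), Real.exp (-(ν + D) * a) * x (σ - a))))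

/-- `Γ(a) = e^{−(ν+D)a} β(a)`. -/
noncomputable def Gam (ν D : ℝ) (β : ℝ → ℝ) (a : ℝ) : ℝ :=
  Real.exp (-(ν + D) * a) * β a

/-- The fixed point operator `X` of the single-cohort Volterra equation:
`X(x)(t) = τ(t) F(x)(t) [ I₀ Γ(t−t₀) + ∫_0^{t−t₀} Γ(a) x(t−a) da ]`. -/
noncomputable def Xop (t₀ ν D δ S₀ R₀ I₀ : ℝ) (τ β : ℝ → ℝ) (x : ℝ → ℝ) (t : ℝ) : ℝ :=
  τ t * Fop t₀ ν D δ S₀ R₀ I₀ x t *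
    (I₀ * Gam ν D β (t - t₀) + ∫ a in (0 : ℝ)..(t - t₀), Gam ν D β a * x (t - a))


/-- bound for interval integrals -/
lemma abs_intInt_le {f : ℝ → ℝ} {a b C : ℝ} (hab : a ≤ b)
    (h : ∀ u ∈ Set.Ioc a b, |f u| ≤ C) : |∫ u in a..b, f u| ≤ C * (b - a) := by
  have := intervalIntegral.norm_integral_le_of_norm_le_const (C := C) (f := f) (a := a) (b := b)
    (by intro x hx; rw [Set.uIoc_of_le hab] at hx; exact h x hx)
  simpa [abs_of_nonneg (sub_nonneg.2 hab)] using this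

/-- factoring an exponential out of the convolution-type integral -/
lemma exp_factor (c a m : ℝ) (g : ℝ → ℝ) :
    (∫ σ in a..m, Real.exp (-c * (m - σ)) * g σ)
      = Real.exp (-c * m) * ∫ σ in a..m, Real.exp (c * σ) * g σ := by
  rw [← intervalIntegral.integral_const_mul]
  apply intervalIntegral.integral_congr
  intro σ _
  show Real.exp (-c * (m - σ)) * g σ = Real.exp (-c * m) * (Real.exp (c * σ) * g σ)
  rw [← mul_assoc, ← Real.exp_add]
  congr 2
  ring

/-- the J integral rewritten as a primitive -/
lemma J_eq (c t₀ σ : ℝ) (x : ℝ → ℝ) :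
    (∫ a in (0:ℝ)..(σ - t₀), Real.exp (-c * a) * x (σ - a))
      = Real.exp (-c * σ) * ∫ u in t₀..σ, Real.exp (c * u) * x u := by
  have h1 : (∫ a in (0:ℝ)..(σ - t₀), Real.exp (-c * a) * x (σ - a))
      = ∫ a in (0:ℝ)..(σ - t₀), (fun u => Real.exp (-c * (σ - u)) * x u) (σ - a) := by
    apply intervalIntegral.integral_congr
    intro a _
    show Real.exp (-c * a) * x (σ - a) = Real.exp (-c * (σ - (σ - a))) * x (σ - a)
    congr 2
    ring
  rw [h1, intervalIntegral.integral_comp_sub_left (fun u => Real.exp (-c * (σ - u)) * x u) σ,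
    sub_sub_cancel, sub_zero]
  exact exp_factor c t₀ σ x

lemma J_contOn {c t₀ b : ℝ} (hb : t₀ ≤ b) {x : ℝ → ℝ}
    (hx : ContinuousOn x (Set.Icc t₀ b)) :
    ContinuousOn (fun σ => ∫ a in (0:ℝ)..(σ - t₀), Real.exp (-c * a) * x (σ - a))
      (Set.Icc t₀ b) := by
  have key : ContinuousOn (fun σ => Real.exp (-c * σ) * ∫ u in t₀..σ, Real.exp (c * u) * x u)
      (Set.Icc t₀ b) := by
    apply ContinuousOn.mul
    · exact (Real.continuous_exp.comp (continuous_const.mul continuous_id)).continuousOn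
    · have hint : IntegrableOn (fun u => Real.exp (c * u) * x u) (Set.uIcc t₀ b) := by
        rw [Set.uIcc_of_le hb]
        exact (((Real.continuous_exp.comp (continuous_const.mul continuous_id)).continuousOn.mul
          hx).integrableOn_compact isCompact_Icc)
      have := intervalIntegral.continuousOn_primitive_interval (a := t₀) (b := b)
        (μ := volume) hint
      rwa [Set.uIcc_of_le hb] at this
  exact key.congr (fun σ _ => J_eq c t₀ σ x)

lemma Q_contOn {δ t₀ b : ℝ} (hb : t₀ ≤ b) {g : ℝ → ℝ}
    (hg : ContinuousOn g (Set.Icc t₀ b)) :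
    ContinuousOn (fun m => ∫ σ in t₀..m, Real.exp (-δ * (m - σ)) * g σ) (Set.Icc t₀ b) := by
  have key : ContinuousOn (fun m => Real.exp (-δ * m) * ∫ σ in t₀..m, Real.exp (δ * σ) * g σ)
      (Set.Icc t₀ b) := by
    apply ContinuousOn.mul
    · exact (Real.continuous_exp.comp (continuous_const.mul continuous_id)).continuousOn
    · have hint : IntegrableOn (fun σ => Real.exp (δ * σ) * g σ) (Set.uIcc t₀ b) := by
        rw [Set.uIcc_of_le hb]
        exact (((Real.continuous_exp.comp (continuous_const.mul continuous_id)).continuousOn.mul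
          hg).integrableOn_compact isCompact_Icc)
      have := intervalIntegral.continuousOn_primitive_interval (a := t₀) (b := b)
        (μ := volume) hint
      rwa [Set.uIcc_of_le hb] at this
  exact key.congr (fun m _ => exp_factor δ t₀ m g)

/-- the integrand of the outer integral in `Fop` -/
noncomputable def Pfun (t₀ ν D δ R₀ I₀ : ℝ) (x : ℝ → ℝ) (m : ℝ) : ℝ :=
  x m - δ * (Real.exp (-δ * (m - t₀)) * R₀ +
    ν * ∫ σ in t₀..m, Real.exp (-δ * (m - σ)) *
      (Real.exp (-(ν + D) * (σ - t₀)) * I₀ +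
        ∫ a in (0 : ℝ)..(σ - t₀), Real.exp (-(ν + D) * a) * x (σ - a)))

lemma Qg_contOn {c t₀ b I₀ : ℝ} (hb : t₀ ≤ b) {x : ℝ → ℝ}
    (hx : ContinuousOn x (Set.Icc t₀ b)) :
    ContinuousOn (fun σ => Real.exp (-c * (σ - t₀)) * I₀ +
      ∫ a in (0:ℝ)..(σ - t₀), Real.exp (-c * a) * x (σ - a)) (Set.Icc t₀ b) := by
  apply ContinuousOn.add
  · exact ((Real.continuous_exp.comp (continuous_const.mul
      (continuous_id.sub continuous_const))).mul continuous_const).continuousOn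
  · exact J_contOn hb hx

lemma P_contOn {t₀ ν D δ R₀ I₀ b : ℝ} (hb : t₀ ≤ b) {x : ℝ → ℝ}
    (hx : ContinuousOn x (Set.Icc t₀ b)) :
    ContinuousOn (Pfun t₀ ν D δ R₀ I₀ x) (Set.Icc t₀ b) := by
  unfold Pfun
  apply hx.sub
  apply ContinuousOn.mul continuousOn_const
  apply ContinuousOn.add
  · exact ((Real.continuous_exp.comp (continuous_const.mul
      (continuous_id.sub continuous_const))).mul continuous_const).continuousOn
  · exact ContinuousOn.mul continuousOn_const (Q_contOn hb (Qg_contOn hb hx))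

lemma Fop_eq (t₀ ν D δ S₀ R₀ I₀ : ℝ) (x : ℝ → ℝ) (t : ℝ) :
    Fop t₀ ν D δ S₀ R₀ I₀ x t = S₀ - ∫ m in t₀..t, Pfun t₀ ν D δ R₀ I₀ x m := rfl

lemma intInt_of_contOn {f : ℝ → ℝ} {t₀ b t : ℝ} (ht : t ∈ Set.Icc t₀ b)
    (hf : ContinuousOn f (Set.Icc t₀ b)) : IntervalIntegrable f volume t₀ t :=
  (hf.mono (by rw [Set.uIcc_of_le ht.1]; exact Set.Icc_subset_Icc_right ht.2)).intervalIntegrable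

lemma Fop_contOn {t₀ ν D δ S₀ R₀ I₀ b : ℝ} (hb : t₀ ≤ b) {x : ℝ → ℝ}
    (hx : ContinuousOn x (Set.Icc t₀ b)) :
    ContinuousOn (Fop t₀ ν D δ S₀ R₀ I₀ x) (Set.Icc t₀ b) := by
  have hint : IntegrableOn (Pfun t₀ ν D δ R₀ I₀ x) (Set.uIcc t₀ b) := by
    rw [Set.uIcc_of_le hb]
    exact (P_contOn hb hx).integrableOn_compact isCompact_Icc
  have := intervalIntegral.continuousOn_primitive_interval (a := t₀) (b := b)
    (μ := volume) hint
  rw [Set.uIcc_of_le hb] at this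
  exact (continuousOn_const.sub this).congr (fun t _ => Fop_eq t₀ ν D δ S₀ R₀ I₀ x t)

/-- with `L_F = 1 + ν δ T²`, for all continuous `x₁, x₂` on `[t₀, t₀+T]`,
`‖X(x₁) − X(x₂)‖ ≤ τ_max T [ L_F (I₀ + T ‖x₁‖) + ‖F(x₂)‖ ] ‖x₁ − x₂‖` for the sup norm. -/
theorem Xop_lipschitz_estimate
    (t₀ ν D δ S₀ R₀ I₀ T τmax : ℝ)
    (hν : 0 < ν) (hD : 0 ≤ D) (hδ : 0 ≤ δ)
    (hS₀ : 0 ≤ S₀) (hR₀ : 0 ≤ R₀) (hI₀ : 0 < I₀) (hT : 0 < T)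
    (τ : ℝ → ℝ) (hτ_cont : ContinuousOn τ (Icc t₀ (t₀ + T)))
    (hτ_nonneg : ∀ t ∈ Icc t₀ (t₀ + T), 0 ≤ τ t)
    (hτ_bdd : ∀ t ∈ Icc t₀ (t₀ + T), τ t ≤ τmax)
    (β : ℝ → ℝ) (hβ_cont : ContinuousOn β (Ici 0))
    (hβ_mem : ∀ a, 0 ≤ a → β a ∈ Icc (0 : ℝ) 1)
    (x₁ x₂ : ℝ → ℝ)
    (hx₁ : ContinuousOn x₁ (Icc t₀ (t₀ + T)))
    (hx₂ : ContinuousOn x₂ (Icc t₀ (t₀ + T))) :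
    (⨆ t : Icc t₀ (t₀ + T),
        |Xop t₀ ν D δ S₀ R₀ I₀ τ β x₁ t - Xop t₀ ν D δ S₀ R₀ I₀ τ β x₂ t|) ≤
      τmax * T *
        ((1 + ν * δ * T ^ 2) * (I₀ + T * ⨆ t : Icc t₀ (t₀ + T), |x₁ t|) +
          ⨆ t : Icc t₀ (t₀ + T), |Fop t₀ ν D δ S₀ R₀ I₀ x₂ t|) *
        ⨆ t : Icc t₀ (t₀ + T), |x₁ t - x₂ t| := by
  have hT' : t₀ ≤ t₀ + T := by linarith
  have ht₀m : t₀ ∈ Icc t₀ (t₀ + T) := ⟨le_refl _, hT'⟩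
  haveI : Nonempty (Icc t₀ (t₀ + T)) := ⟨⟨t₀, ht₀m⟩⟩
  obtain ⟨C₁, hC₁⟩ := isCompact_Icc.exists_bound_of_continuousOn hx₁
  have bdd₁ : BddAbove (Set.range fun t : Icc t₀ (t₀ + T) => |x₁ t|) :=
    ⟨C₁, by rintro y ⟨t, rfl⟩; simpa using hC₁ t t.2⟩
  set M₁ := ⨆ t : Icc t₀ (t₀ + T), |x₁ t| with hM₁def
  have hM₁ : ∀ t ∈ Icc t₀ (t₀ + T), |x₁ t| ≤ M₁ := fun t ht => le_ciSup bdd₁ ⟨t, ht⟩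
  have hM₁0 : 0 ≤ M₁ := le_trans (abs_nonneg _) (hM₁ t₀ ht₀m)
  obtain ⟨CΔ, hCΔ⟩ := isCompact_Icc.exists_bound_of_continuousOn (hx₁.sub hx₂)
  have bddΔ : BddAbove (Set.range fun t : Icc t₀ (t₀ + T) => |x₁ t - x₂ t|) :=
    ⟨CΔ, by rintro y ⟨t, rfl⟩; simpa using hCΔ t t.2⟩
  set MΔ := ⨆ t : Icc t₀ (t₀ + T), |x₁ t - x₂ t| with hMΔdef
  have hMΔ : ∀ t ∈ Icc t₀ (t₀ + T), |x₁ t - x₂ t| ≤ MΔ := fun t ht => le_ciSup bddΔ ⟨t, ht⟩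
  have hMΔ0 : 0 ≤ MΔ := le_trans (abs_nonneg _) (hMΔ t₀ ht₀m)
  obtain ⟨CF, hCF⟩ := isCompact_Icc.exists_bound_of_continuousOn (Fop_contOn hT' hx₂
    (ν := ν) (D := D) (δ := δ) (S₀ := S₀) (R₀ := R₀) (I₀ := I₀))
  have bddF : BddAbove (Set.range fun t : Icc t₀ (t₀ + T) => |Fop t₀ ν D δ S₀ R₀ I₀ x₂ t|) :=
    ⟨CF, by rintro y ⟨t, rfl⟩; simpa using hCF t t.2⟩
  set MF := ⨆ t : Icc t₀ (t₀ + T), |Fop t₀ ν D δ S₀ R₀ I₀ x₂ t| with hMFdef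
  have hMF : ∀ t ∈ Icc t₀ (t₀ + T), |Fop t₀ ν D δ S₀ R₀ I₀ x₂ t| ≤ MF :=
    fun t ht => le_ciSup bddF ⟨t, ht⟩
  have hMF0 : 0 ≤ MF := le_trans (abs_nonneg _) (hMF t₀ ht₀m)
  have hτ0 : 0 ≤ τmax := (hτ_nonneg t₀ ht₀m).trans (hτ_bdd t₀ ht₀m)
  apply ciSup_le
  rintro ⟨t, ht⟩
  have ht1 : t₀ ≤ t := ht.1
  have ht2 : t ≤ t₀ + T := ht.2
  have hexp_le_one : ∀ c a : ℝ, 0 ≤ c → 0 ≤ a → Real.exp (-c * a) ≤ 1 := by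
    intro c a hc ha
    rw [← Real.exp_zero]
    apply Real.exp_le_exp.mpr
    nlinarith
  -- difference of the inner J integrals
  have hJ : ∀ σ ∈ Icc t₀ (t₀ + T),
      |(∫ a in (0:ℝ)..(σ - t₀), Real.exp (-(ν + D) * a) * x₁ (σ - a)) -
        ∫ a in (0:ℝ)..(σ - t₀), Real.exp (-(ν + D) * a) * x₂ (σ - a)| ≤ T * MΔ := by
    intro σ hσ
    have hσ0 : (0:ℝ) ≤ σ - t₀ := by linarith [hσ.1]
    have hmap : MapsTo (fun a => σ - a) (Icc (0:ℝ) (σ - t₀)) (Icc t₀ (t₀ + T)) := by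
      intro a ha
      show σ - a ∈ Icc t₀ (t₀ + T)
      exact ⟨by linarith [ha.2], by linarith [ha.1, hσ.2]⟩
    have hcomp : ContinuousOn (fun a : ℝ => σ - a) (Icc (0:ℝ) (σ - t₀)) :=
      (continuous_const.sub continuous_id).continuousOn
    have hi₁ : IntervalIntegrable (fun a => Real.exp (-(ν + D) * a) * x₁ (σ - a))
        volume 0 (σ - t₀) := by
      apply ContinuousOn.intervalIntegrable
      rw [uIcc_of_le hσ0]
      exact ((Real.continuous_exp.comp (by fun_prop)).continuousOn).mul
        (hx₁.comp hcomp hmap)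
    have hi₂ : IntervalIntegrable (fun a => Real.exp (-(ν + D) * a) * x₂ (σ - a))
        volume 0 (σ - t₀) := by
      apply ContinuousOn.intervalIntegrable
      rw [uIcc_of_le hσ0]
      exact ((Real.continuous_exp.comp (by fun_prop)).continuousOn).mul
        (hx₂.comp hcomp hmap)
    rw [← intervalIntegral.integral_sub hi₁ hi₂]
    have hptw : ∀ a ∈ Set.Ioc (0:ℝ) (σ - t₀),
        |Real.exp (-(ν + D) * a) * x₁ (σ - a) - Real.exp (-(ν + D) * a) * x₂ (σ - a)| ≤ MΔ := by
      intro a ha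
      have hmem : σ - a ∈ Icc t₀ (t₀ + T) := ⟨by linarith [ha.2], by linarith [ha.1.le, hσ.2]⟩
      have e1 : |Real.exp (-(ν + D) * a) * x₁ (σ - a) - Real.exp (-(ν + D) * a) * x₂ (σ - a)|
          = Real.exp (-(ν + D) * a) * |x₁ (σ - a) - x₂ (σ - a)| := by
        rw [← mul_sub, abs_mul, abs_of_pos (Real.exp_pos _)]
      rw [e1]
      calc Real.exp (-(ν + D) * a) * |x₁ (σ - a) - x₂ (σ - a)| ≤ 1 * MΔ :=
            mul_le_mul (hexp_le_one _ _ (by linarith) ha.1.le) (hMΔ _ hmem)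
              (abs_nonneg _) zero_le_one
        _ = MΔ := one_mul _
    refine le_trans (abs_intInt_le hσ0 hptw) ?_
    nlinarith [hMΔ0, hσ.1, hσ.2, mul_nonneg hMΔ0 (by linarith [hσ.2] : (0:ℝ) ≤ t₀ + T - σ)]
  -- Q difference bound
  have hQ : ∀ m ∈ Icc t₀ (t₀ + T),
      |(∫ σ in t₀..m, Real.exp (-δ * (m - σ)) * (Real.exp (-(ν + D) * (σ - t₀)) * I₀ +
          ∫ a in (0:ℝ)..(σ - t₀), Real.exp (-(ν + D) * a) * x₁ (σ - a))) -
        ∫ σ in t₀..m, Real.exp (-δ * (m - σ)) * (Real.exp (-(ν + D) * (σ - t₀)) * I₀ +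
          ∫ a in (0:ℝ)..(σ - t₀), Real.exp (-(ν + D) * a) * x₂ (σ - a))| ≤ T * MΔ * (m - t₀) := by
    intro m hm
    have hexpc : ContinuousOn (fun σ : ℝ => Real.exp (-δ * (m - σ))) (Icc t₀ (t₀ + T)) :=
      (Real.continuous_exp.comp (by fun_prop)).continuousOn
    have hi₁ : IntervalIntegrable (fun σ => Real.exp (-δ * (m - σ)) *
        (Real.exp (-(ν + D) * (σ - t₀)) * I₀ +
          ∫ a in (0:ℝ)..(σ - t₀), Real.exp (-(ν + D) * a) * x₁ (σ - a))) volume t₀ m :=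
      intInt_of_contOn hm (hexpc.mul (Qg_contOn hT' hx₁))
    have hi₂ : IntervalIntegrable (fun σ => Real.exp (-δ * (m - σ)) *
        (Real.exp (-(ν + D) * (σ - t₀)) * I₀ +
          ∫ a in (0:ℝ)..(σ - t₀), Real.exp (-(ν + D) * a) * x₂ (σ - a))) volume t₀ m :=
      intInt_of_contOn hm (hexpc.mul (Qg_contOn hT' hx₂))
    rw [← intervalIntegral.integral_sub hi₁ hi₂]
    have hptw : ∀ σ ∈ Set.Ioc t₀ m,
        |Real.exp (-δ * (m - σ)) * (Real.exp (-(ν + D) * (σ - t₀)) * I₀ +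
            ∫ a in (0:ℝ)..(σ - t₀), Real.exp (-(ν + D) * a) * x₁ (σ - a)) -
          Real.exp (-δ * (m - σ)) * (Real.exp (-(ν + D) * (σ - t₀)) * I₀ +
            ∫ a in (0:ℝ)..(σ - t₀), Real.exp (-(ν + D) * a) * x₂ (σ - a))| ≤ T * MΔ := by
      intro σ hσ
      have hσm : σ ∈ Icc t₀ (t₀ + T) := ⟨hσ.1.le, le_trans hσ.2 hm.2⟩
      have e1 : Real.exp (-δ * (m - σ)) * (Real.exp (-(ν + D) * (σ - t₀)) * I₀ +
            ∫ a in (0:ℝ)..(σ - t₀), Real.exp (-(ν + D) * a) * x₁ (σ - a)) -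
          Real.exp (-δ * (m - σ)) * (Real.exp (-(ν + D) * (σ - t₀)) * I₀ +
            ∫ a in (0:ℝ)..(σ - t₀), Real.exp (-(ν + D) * a) * x₂ (σ - a))
          = Real.exp (-δ * (m - σ)) *
            ((∫ a in (0:ℝ)..(σ - t₀), Real.exp (-(ν + D) * a) * x₁ (σ - a)) -
              ∫ a in (0:ℝ)..(σ - t₀), Real.exp (-(ν + D) * a) * x₂ (σ - a)) := by ring
      rw [e1, abs_mul, abs_of_pos (Real.exp_pos _)]
      calc Real.exp (-δ * (m - σ)) *
            |(∫ a in (0:ℝ)..(σ - t₀), Real.exp (-(ν + D) * a) * x₁ (σ - a)) -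
              ∫ a in (0:ℝ)..(σ - t₀), Real.exp (-(ν + D) * a) * x₂ (σ - a)|
          ≤ 1 * (T * MΔ) :=
            mul_le_mul (hexp_le_one δ (m - σ) hδ (by linarith [hσ.2])) (hJ σ hσm)
              (abs_nonneg _) zero_le_one
        _ = T * MΔ := one_mul _
    exact abs_intInt_le hm.1 hptw
  -- P difference bound
  have hPdiff : ∀ m ∈ Set.Ioc t₀ t,
      |Pfun t₀ ν D δ R₀ I₀ x₁ m - Pfun t₀ ν D δ R₀ I₀ x₂ m| ≤ (1 + ν * δ * T ^ 2) * MΔ := by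
    intro m hm
    have hm' : m ∈ Icc t₀ (t₀ + T) := ⟨hm.1.le, le_trans hm.2 ht2⟩
    have e1 : Pfun t₀ ν D δ R₀ I₀ x₁ m - Pfun t₀ ν D δ R₀ I₀ x₂ m
        = (x₁ m - x₂ m) - δ * ν *
          ((∫ σ in t₀..m, Real.exp (-δ * (m - σ)) * (Real.exp (-(ν + D) * (σ - t₀)) * I₀ +
              ∫ a in (0:ℝ)..(σ - t₀), Real.exp (-(ν + D) * a) * x₁ (σ - a))) -
            ∫ σ in t₀..m, Real.exp (-δ * (m - σ)) * (Real.exp (-(ν + D) * (σ - t₀)) * I₀ +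
              ∫ a in (0:ℝ)..(σ - t₀), Real.exp (-(ν + D) * a) * x₂ (σ - a))) := by
      unfold Pfun; ring
    rw [e1]
    refine le_trans (abs_sub _ _) ?_
    rw [abs_mul, abs_of_nonneg (mul_nonneg hδ hν.le)]
    have hmt : m - t₀ ≤ T := by linarith [hm.2, ht2]
    have h4 := le_trans (hQ m hm')
      (mul_le_mul_of_nonneg_left hmt (mul_nonneg hT.le hMΔ0))
    nlinarith [h4, hMΔ m hm', mul_nonneg hδ hν.le, hMΔ0, hT.le, abs_nonneg
      ((∫ σ in t₀..m, Real.exp (-δ * (m - σ)) * (Real.exp (-(ν + D) * (σ - t₀)) * I₀ +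
          ∫ a in (0:ℝ)..(σ - t₀), Real.exp (-(ν + D) * a) * x₁ (σ - a))) -
        ∫ σ in t₀..m, Real.exp (-δ * (m - σ)) * (Real.exp (-(ν + D) * (σ - t₀)) * I₀ +
          ∫ a in (0:ℝ)..(σ - t₀), Real.exp (-(ν + D) * a) * x₂ (σ - a)))]
  -- F difference bound
  have hF : |Fop t₀ ν D δ S₀ R₀ I₀ x₁ t - Fop t₀ ν D δ S₀ R₀ I₀ x₂ t|
      ≤ (1 + ν * δ * T ^ 2) * MΔ * T := by
    have hi₁ := intInt_of_contOn ht (P_contOn hT' hx₁ (ν := ν) (D := D) (δ := δ) (R₀ := R₀) (I₀ := I₀))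
    have hi₂ := intInt_of_contOn ht (P_contOn hT' hx₂ (ν := ν) (D := D) (δ := δ) (R₀ := R₀) (I₀ := I₀))
    have e1 : Fop t₀ ν D δ S₀ R₀ I₀ x₁ t - Fop t₀ ν D δ S₀ R₀ I₀ x₂ t
        = -(∫ m in t₀..t, (Pfun t₀ ν D δ R₀ I₀ x₁ m - Pfun t₀ ν D δ R₀ I₀ x₂ m)) := by
      rw [Fop_eq, Fop_eq, intervalIntegral.integral_sub hi₁ hi₂]
      ring
    rw [e1, abs_neg]
    refine le_trans (abs_intInt_le ht1 hPdiff) ?_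
    nlinarith [ht2, hν.le, hδ, hMΔ0, hT.le, ht1,
      mul_nonneg (mul_nonneg hν.le hδ) (mul_nonneg hT.le hT.le),
      mul_nonneg (mul_nonneg (by nlinarith [mul_nonneg (mul_nonneg hν.le hδ) (mul_nonneg hT.le hT.le)] : (0:ℝ) ≤ 1 + ν * δ * T ^ 2) hMΔ0) (by linarith : (0:ℝ) ≤ t₀ + T - t)]
  -- G bounds
  have ht0' : (0:ℝ) ≤ t - t₀ := by linarith
  have hGamle : ∀ a : ℝ, 0 ≤ a → |Gam ν D β a| ≤ 1 := by
    intro a ha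
    unfold Gam
    rw [abs_mul, abs_of_pos (Real.exp_pos _)]
    have hb := hβ_mem a ha
    calc Real.exp (-(ν + D) * a) * |β a| ≤ 1 * 1 :=
        mul_le_mul (hexp_le_one _ _ (by linarith) ha) (abs_le.mpr ⟨by linarith [hb.1], hb.2⟩)
          (abs_nonneg _) zero_le_one
      _ = 1 := one_mul 1
  have hGamc : ContinuousOn (Gam ν D β) (Icc (0:ℝ) (t - t₀)) := by
    unfold Gam
    exact ((Real.continuous_exp.comp (by fun_prop)).continuousOn).mul
      (hβ_cont.mono (fun a ha => ha.1))
  have hmapG : MapsTo (fun a => t - a) (Icc (0:ℝ) (t - t₀)) (Icc t₀ (t₀ + T)) := by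
    intro a ha
    show t - a ∈ Icc t₀ (t₀ + T)
    exact ⟨by linarith [ha.2], by linarith [ha.1]⟩
  have hcompG : ContinuousOn (fun a : ℝ => t - a) (Icc (0:ℝ) (t - t₀)) :=
    (continuous_const.sub continuous_id).continuousOn
  have hgi₁ : IntervalIntegrable (fun a => Gam ν D β a * x₁ (t - a)) volume 0 (t - t₀) := by
    apply ContinuousOn.intervalIntegrable
    rw [uIcc_of_le ht0']
    exact hGamc.mul (hx₁.comp hcompG hmapG)
  have hgi₂ : IntervalIntegrable (fun a => Gam ν D β a * x₂ (t - a)) volume 0 (t - t₀) := by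
    apply ContinuousOn.intervalIntegrable
    rw [uIcc_of_le ht0']
    exact hGamc.mul (hx₂.comp hcompG hmapG)
  have hG₁ : |I₀ * Gam ν D β (t - t₀) + ∫ a in (0:ℝ)..(t - t₀), Gam ν D β a * x₁ (t - a)|
      ≤ I₀ + T * M₁ := by
    have h1 : |I₀ * Gam ν D β (t - t₀)| ≤ I₀ := by
      rw [abs_mul, abs_of_pos hI₀]
      calc I₀ * |Gam ν D β (t - t₀)| ≤ I₀ * 1 :=
          mul_le_mul_of_nonneg_left (hGamle _ ht0') hI₀.le
        _ = I₀ := mul_one _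
    have h2 : |∫ a in (0:ℝ)..(t - t₀), Gam ν D β a * x₁ (t - a)| ≤ M₁ * (t - t₀ - 0) := by
      apply abs_intInt_le ht0'
      intro a ha
      have hmem : t - a ∈ Icc t₀ (t₀ + T) := ⟨by linarith [ha.2], by linarith [ha.1.le]⟩
      calc |Gam ν D β a * x₁ (t - a)| = |Gam ν D β a| * |x₁ (t - a)| := abs_mul _ _
        _ ≤ 1 * M₁ := mul_le_mul (hGamle a ha.1.le) (hM₁ _ hmem) (abs_nonneg _) zero_le_one
        _ = M₁ := one_mul _
    refine le_trans (abs_add_le _ _) ?_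
    nlinarith [h1, h2, hM₁0, ht2]
  have hGd : |(I₀ * Gam ν D β (t - t₀) + ∫ a in (0:ℝ)..(t - t₀), Gam ν D β a * x₁ (t - a)) -
      (I₀ * Gam ν D β (t - t₀) + ∫ a in (0:ℝ)..(t - t₀), Gam ν D β a * x₂ (t - a))|
      ≤ T * MΔ := by
    have e1 : (I₀ * Gam ν D β (t - t₀) + ∫ a in (0:ℝ)..(t - t₀), Gam ν D β a * x₁ (t - a)) -
        (I₀ * Gam ν D β (t - t₀) + ∫ a in (0:ℝ)..(t - t₀), Gam ν D β a * x₂ (t - a))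
        = ∫ a in (0:ℝ)..(t - t₀), (Gam ν D β a * x₁ (t - a) - Gam ν D β a * x₂ (t - a)) := by
      rw [intervalIntegral.integral_sub hgi₁ hgi₂]
      ring
    rw [e1]
    have h2 : |∫ a in (0:ℝ)..(t - t₀), (Gam ν D β a * x₁ (t - a) - Gam ν D β a * x₂ (t - a))|
        ≤ MΔ * (t - t₀ - 0) := by
      apply abs_intInt_le ht0'
      intro a ha
      have hmem : t - a ∈ Icc t₀ (t₀ + T) := ⟨by linarith [ha.2], by linarith [ha.1.le]⟩
      calc |Gam ν D β a * x₁ (t - a) - Gam ν D β a * x₂ (t - a)|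
          = |Gam ν D β a| * |x₁ (t - a) - x₂ (t - a)| := by rw [← mul_sub, abs_mul]
        _ ≤ 1 * MΔ := mul_le_mul (hGamle a ha.1.le) (hMΔ _ hmem) (abs_nonneg _) zero_le_one
        _ = MΔ := one_mul _
    refine le_trans h2 ?_
    nlinarith [hMΔ0, ht2]
  -- assemble
  have hτt : |τ t| ≤ τmax := by
    rw [abs_of_nonneg (hτ_nonneg t ht)]
    exact hτ_bdd t ht
  have hF₂ : |Fop t₀ ν D δ S₀ R₀ I₀ x₂ t| ≤ MF := hMF t ht
  show |Xop t₀ ν D δ S₀ R₀ I₀ τ β x₁ t - Xop t₀ ν D δ S₀ R₀ I₀ τ β x₂ t| ≤ _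
  have hXd : Xop t₀ ν D δ S₀ R₀ I₀ τ β x₁ t - Xop t₀ ν D δ S₀ R₀ I₀ τ β x₂ t
      = τ t * (Fop t₀ ν D δ S₀ R₀ I₀ x₁ t *
          (I₀ * Gam ν D β (t - t₀) + ∫ a in (0:ℝ)..(t - t₀), Gam ν D β a * x₁ (t - a)) -
        Fop t₀ ν D δ S₀ R₀ I₀ x₂ t *
          (I₀ * Gam ν D β (t - t₀) + ∫ a in (0:ℝ)..(t - t₀), Gam ν D β a * x₂ (t - a))) := by
    unfold Xop
    ring
  rw [hXd, abs_mul]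
  have hL0 : (0:ℝ) ≤ (1 + ν * δ * T ^ 2) * MΔ * T := by
    have : (0:ℝ) ≤ 1 + ν * δ * T ^ 2 := by nlinarith [mul_nonneg (mul_nonneg hν.le hδ) (mul_nonneg hT.le hT.le)]
    exact mul_nonneg (mul_nonneg this hMΔ0) hT.le
  have hmid : |Fop t₀ ν D δ S₀ R₀ I₀ x₁ t *
        (I₀ * Gam ν D β (t - t₀) + ∫ a in (0:ℝ)..(t - t₀), Gam ν D β a * x₁ (t - a)) -
      Fop t₀ ν D δ S₀ R₀ I₀ x₂ t *
        (I₀ * Gam ν D β (t - t₀) + ∫ a in (0:ℝ)..(t - t₀), Gam ν D β a * x₂ (t - a))|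
      ≤ ((1 + ν * δ * T ^ 2) * MΔ * T) * (I₀ + T * M₁) + MF * (T * MΔ) := by
    have hsplit : Fop t₀ ν D δ S₀ R₀ I₀ x₁ t *
          (I₀ * Gam ν D β (t - t₀) + ∫ a in (0:ℝ)..(t - t₀), Gam ν D β a * x₁ (t - a)) -
        Fop t₀ ν D δ S₀ R₀ I₀ x₂ t *
          (I₀ * Gam ν D β (t - t₀) + ∫ a in (0:ℝ)..(t - t₀), Gam ν D β a * x₂ (t - a))
        = (Fop t₀ ν D δ S₀ R₀ I₀ x₁ t - Fop t₀ ν D δ S₀ R₀ I₀ x₂ t) *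
            (I₀ * Gam ν D β (t - t₀) + ∫ a in (0:ℝ)..(t - t₀), Gam ν D β a * x₁ (t - a)) +
          Fop t₀ ν D δ S₀ R₀ I₀ x₂ t *
            ((I₀ * Gam ν D β (t - t₀) + ∫ a in (0:ℝ)..(t - t₀), Gam ν D β a * x₁ (t - a)) -
              (I₀ * Gam ν D β (t - t₀) + ∫ a in (0:ℝ)..(t - t₀), Gam ν D β a * x₂ (t - a))) := by
      ring
    rw [hsplit]
    refine (abs_add_le _ _).trans ?_
    rw [abs_mul, abs_mul]
    exact add_le_add (mul_le_mul hF hG₁ (abs_nonneg _) hL0)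
      (mul_le_mul hF₂ hGd (abs_nonneg _) hMF0)
  calc |τ t| * |Fop t₀ ν D δ S₀ R₀ I₀ x₁ t *
        (I₀ * Gam ν D β (t - t₀) + ∫ a in (0:ℝ)..(t - t₀), Gam ν D β a * x₁ (t - a)) -
      Fop t₀ ν D δ S₀ R₀ I₀ x₂ t *
        (I₀ * Gam ν D β (t - t₀) + ∫ a in (0:ℝ)..(t - t₀), Gam ν D β a * x₂ (t - a))|
      ≤ τmax * (((1 + ν * δ * T ^ 2) * MΔ * T) * (I₀ + T * M₁) + MF * (T * MΔ)) :=
        mul_le_mul hτt hmid (abs_nonneg _) hτ0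
    _ = τmax * T * ((1 + ν * δ * T ^ 2) * (I₀ + T * M₁) + MF) * MΔ := by ring
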